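/- Let A be an (j+1)×(j+1) real matrix, and for index sets denote by [r_1,...,r_p ; c_1,...,c_p] the determinant of the matrix obtained from A by deleting rows r_1,...,r_p and columns c_1,...,c_p. Then (Sylvester's determinant identity, 2×2 case): [j, j+1 ; j, j+1] · det A = [j+1 ; j+1] · [j ; j] − [j+1 ; j] · [j ; j+1]. -/
import Mathlib

open Matrix

namespace Statement8Aux

variable {R : Type*} [CommRing R]

/-- Index `m` inside `Fin (m+2)`. -/
def pIdx (m : ℕ) : Fin (m + 2) := ⟨m, by omega⟩

/-- The auxiliary matrix: identity except its columns `m` and `m+1` are the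
corresponding columns of the adjugate of `A`. -/
noncomputable def sylB (m : ℕ) (A : Matrix (Fin (m + 2)) (Fin (m + 2)) R) :
    Matrix (Fin (m + 2)) (Fin (m + 2)) R :=
  Matrix.of fun i j =>
    if j = pIdx m then adjugate A i (pIdx m)
    else if j = Fin.last (m + 1) then adjugate A i (Fin.last (m + 1))
    else (1 : Matrix (Fin (m + 2)) (Fin (m + 2)) R) i j

lemma mul_sylB (m : ℕ) (A : Matrix (Fin (m + 2)) (Fin (m + 2)) R) :
    A * sylB m A = Matrix.of fun i j =>
      if j = pIdx m then A.det * (1 : Matrix (Fin (m + 2)) (Fin (m + 2)) R) i (pIdx m)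
      else if j = Fin.last (m + 1) then
        A.det * (1 : Matrix (Fin (m + 2)) (Fin (m + 2)) R) i (Fin.last (m + 1))
      else A i j := by
  ext i j
  simp only [mul_apply, sylB, of_apply]
  by_cases h1 : j = pIdx m
  · subst h1
    simp only [if_pos rfl]
    have h := congrFun (congrFun (mul_adjugate A) i) (pIdx m)
    simpa [mul_apply, smul_eq_mul] using h
  · by_cases h2 : j = Fin.last (m + 1)
    · subst h2
      simp only [if_neg h1, if_pos rfl]
      have h := congrFun (congrFun (mul_adjugate A) i) (Fin.last (m + 1))
      simpa [mul_apply, smul_eq_mul] using h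
    · simp [if_neg h1, if_neg h2, one_apply, mul_ite]

/-- Determinant via block triangular decomposition (zero lower-left). -/
lemma det_blocks₂₁ {m : ℕ} (C : Matrix (Fin m ⊕ Fin 2) (Fin m ⊕ Fin 2) R)
    (h : C.toBlocks₂₁ = 0) : C.det = C.toBlocks₁₁.det * C.toBlocks₂₂.det := by
  conv_lhs => rw [← fromBlocks_toBlocks C, h]
  rw [det_fromBlocks_zero₂₁]

lemma det_blocks₁₂ {m : ℕ} (C : Matrix (Fin m ⊕ Fin 2) (Fin m ⊕ Fin 2) R)
    (h : C.toBlocks₁₂ = 0) : C.det = C.toBlocks₁₁.det * C.toBlocks₂₂.det := by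
  conv_lhs => rw [← fromBlocks_toBlocks C, h]
  rw [det_fromBlocks_zero₁₂]

lemma e_inl {m : ℕ} (i : Fin m) :
    (finSumFinEquiv : Fin m ⊕ Fin 2 ≃ Fin (m + 2)) (Sum.inl i) = i.castSucc.castSucc := by
  apply Fin.ext
  simp [finSumFinEquiv_apply_left]

lemma e_inr0 {m : ℕ} :
    (finSumFinEquiv : Fin m ⊕ Fin 2 ≃ Fin (m + 2)) (Sum.inr 0) = pIdx m := by
  apply Fin.ext
  simp [finSumFinEquiv_apply_right, pIdx]

lemma e_inr1 {m : ℕ} :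
    (finSumFinEquiv : Fin m ⊕ Fin 2 ≃ Fin (m + 2)) (Sum.inr 1) = Fin.last (m + 1) := by
  apply Fin.ext
  simp [finSumFinEquiv_apply_right]

lemma natAdd0 {m : ℕ} : (Fin.natAdd m (0 : Fin 2)) = pIdx m := by
  apply Fin.ext; simp [pIdx]

lemma natAdd1 {m : ℕ} : (Fin.natAdd m (1 : Fin 2)) = Fin.last (m + 1) := by
  apply Fin.ext; simp

lemma castAdd2 {m : ℕ} (i : Fin m) :
    (Fin.castAdd 2 i : Fin (m + 2)) = i.castSucc.castSucc := by
  apply Fin.ext; simp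

lemma castAdd_ne_pIdx {m : ℕ} (i : Fin m) : (Fin.castAdd 2 i : Fin (m + 2)) ≠ pIdx m := by
  intro h; have := congrArg Fin.val h; simp [pIdx] at this; omega

lemma castAdd_ne_last {m : ℕ} (i : Fin m) :
    (Fin.castAdd 2 i : Fin (m + 2)) ≠ Fin.last (m + 1) := by
  intro h; have := congrArg Fin.val h; simp [Fin.last] at this; omega

lemma castSucc2_ne_pIdx {m : ℕ} (i : Fin m) :
    (i.castSucc.castSucc : Fin (m + 2)) ≠ pIdx m := by
  intro h; have := congrArg Fin.val h; simp [pIdx] at this; omega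

lemma castSucc2_ne_last {m : ℕ} (i : Fin m) :
    (i.castSucc.castSucc : Fin (m + 2)) ≠ Fin.last (m + 1) := by
  intro h; have := congrArg Fin.val h; simp [Fin.last] at this; omega

lemma last_ne_pIdx {m : ℕ} : (Fin.last (m + 1) : Fin (m + 2)) ≠ pIdx m := by
  intro h; have := congrArg Fin.val h; simp [pIdx, Fin.last] at this

lemma det_sylB (m : ℕ) (A : Matrix (Fin (m + 2)) (Fin (m + 2)) R) :
    (sylB m A).det =
      (A.submatrix Fin.castSucc Fin.castSucc).det *
          (A.submatrix (Fin.succAbove (pIdx m)) (Fin.succAbove (pIdx m))).det -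
        (A.submatrix Fin.castSucc (Fin.succAbove (pIdx m))).det *
          (A.submatrix (Fin.succAbove (pIdx m)) Fin.castSucc).det := by
  set e : Fin m ⊕ Fin 2 ≃ Fin (m + 2) := finSumFinEquiv with he
  have hd : (sylB m A).det = ((sylB m A).submatrix e e).det :=
    (det_submatrix_equiv_self e _).symm
  have h21 : ((sylB m A).submatrix e e).toBlocks₂₁ = 0 := by
    ext i j
    have hne : e (Sum.inr i) ≠ e (Sum.inl j) := e.injective.ne (by simp)
    have hj1 : e (Sum.inl j) ≠ pIdx m := by
      rw [e_inl]; intro h; have := congrArg Fin.val h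
      simp [pIdx] at this; omega
    have hj2 : e (Sum.inl j) ≠ Fin.last (m + 1) := by
      rw [e_inl]; intro h; have := congrArg Fin.val h
      simp [Fin.last] at this; omega
    simp [toBlocks₂₁, sylB, hj1, hj2, one_apply_ne hne]
  have h11 : ((sylB m A).submatrix e e).toBlocks₁₁ = (1 : Matrix (Fin m) (Fin m) R) := by
    ext i j
    have hj1 : e (Sum.inl j) ≠ pIdx m := by
      rw [e_inl]; intro h; have := congrArg Fin.val h
      simp [pIdx] at this; omega
    have hj2 : e (Sum.inl j) ≠ Fin.last (m + 1) := by
      rw [e_inl]; intro h; have := congrArg Fin.val h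
      simp [Fin.last] at this; omega
    simp only [toBlocks₁₁, of_apply, submatrix_apply, sylB, if_neg hj1, if_neg hj2]
    simp [one_apply, e.injective.eq_iff]
  have h22 : ((sylB m A).submatrix e e).toBlocks₂₂ =
      !![adjugate A (pIdx m) (pIdx m), adjugate A (pIdx m) (Fin.last (m + 1));
         adjugate A (Fin.last (m + 1)) (pIdx m),
         adjugate A (Fin.last (m + 1)) (Fin.last (m + 1))] := by
    have hlastne : Fin.last (m + 1) ≠ pIdx m := by
      intro h; have := congrArg Fin.val h; simp [pIdx, Fin.last] at this
    ext i j
    fin_cases i <;> fin_cases j <;>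
      simp [toBlocks₂₂, sylB, he, e_inr0, e_inr1, natAdd0, natAdd1, hlastne, hlastne.symm]
  have hlastp : ((Fin.last (m + 1) : Fin (m + 2)) : ℕ) + ((pIdx m : Fin (m + 2)) : ℕ)
      = 2 * m + 1 := by simp [pIdx, Fin.last]; ring
  have hadj_pl : adjugate A (pIdx m) (Fin.last (m + 1)) =
      -(A.submatrix Fin.castSucc (Fin.succAbove (pIdx m))).det := by
    rw [adjugate_fin_succ_eq_det_submatrix, hlastp, Fin.succAbove_last]
    rw [Odd.neg_one_pow ⟨m, by ring⟩]; ring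
  have hadj_lp : adjugate A (Fin.last (m + 1)) (pIdx m) =
      -(A.submatrix (Fin.succAbove (pIdx m)) Fin.castSucc).det := by
    rw [adjugate_fin_succ_eq_det_submatrix]
    have : ((pIdx m : Fin (m + 2)) : ℕ) + ((Fin.last (m + 1) : Fin (m + 2)) : ℕ)
        = 2 * m + 1 := by simp [pIdx, Fin.last]; ring
    rw [this, Fin.succAbove_last, Odd.neg_one_pow ⟨m, by ring⟩]; ring
  have hadj_pp : adjugate A (pIdx m) (pIdx m) =
      (A.submatrix (Fin.succAbove (pIdx m)) (Fin.succAbove (pIdx m))).det := by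
    rw [adjugate_fin_succ_eq_det_submatrix]
    have : ((pIdx m : Fin (m + 2)) : ℕ) + ((pIdx m : Fin (m + 2)) : ℕ) = 2 * m := by
      simp [pIdx]; ring
    rw [this, Even.neg_one_pow ⟨m, by ring⟩, one_mul]
  have hadj_ll : adjugate A (Fin.last (m + 1)) (Fin.last (m + 1)) =
      (A.submatrix Fin.castSucc Fin.castSucc).det := by
    rw [adjugate_fin_succ_eq_det_submatrix, Fin.succAbove_last]
    have : ((Fin.last (m + 1) : Fin (m + 2)) : ℕ) + ((Fin.last (m + 1) : Fin (m + 2)) : ℕ)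
        = 2 * (m + 1) := by simp [Fin.last]; ring
    rw [this, Even.neg_one_pow ⟨m + 1, by ring⟩, one_mul]
  rw [hd, det_blocks₂₁ _ h21, h11, h22, det_one, one_mul, det_fin_two_of,
    hadj_pl, hadj_lp, hadj_pp, hadj_ll]
  ring

lemma det_mul_sylB (m : ℕ) (A : Matrix (Fin (m + 2)) (Fin (m + 2)) R) :
    (A * sylB m A).det =
      (A.submatrix (fun i : Fin m => i.castSucc.castSucc)
        (fun i : Fin m => i.castSucc.castSucc)).det * (A.det * A.det) := by
  set e : Fin m ⊕ Fin 2 ≃ Fin (m + 2) := finSumFinEquiv with he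
  rw [mul_sylB]
  set C := Matrix.of fun i j =>
      if j = pIdx m then A.det * (1 : Matrix (Fin (m + 2)) (Fin (m + 2)) R) i (pIdx m)
      else if j = Fin.last (m + 1) then
        A.det * (1 : Matrix (Fin (m + 2)) (Fin (m + 2)) R) i (Fin.last (m + 1))
      else A i j with hC
  have hd : C.det = ((C.submatrix e e)).det := (det_submatrix_equiv_self e _).symm
  have h12 : (C.submatrix e e).toBlocks₁₂ = 0 := by
    ext i j
    fin_cases j <;>
      simp [toBlocks₁₂, hC, he, natAdd0, natAdd1, last_ne_pIdx,
        one_apply_ne (castAdd_ne_pIdx i), one_apply_ne (castAdd_ne_last i)]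
  have h11 : (C.submatrix e e).toBlocks₁₁ =
      A.submatrix (fun i : Fin m => i.castSucc.castSucc)
        (fun i : Fin m => i.castSucc.castSucc) := by
    ext i j
    simp [toBlocks₁₁, hC, he, castAdd2, if_neg (castSucc2_ne_pIdx j), if_neg (castSucc2_ne_last j)]
  have h22 : (C.submatrix e e).toBlocks₂₂ = !![A.det, 0; 0, A.det] := by
    ext i j
    fin_cases i <;> fin_cases j <;>
      simp [toBlocks₂₂, hC, he, natAdd0, natAdd1, one_apply, last_ne_pIdx, last_ne_pIdx.symm]
  rw [hd, det_blocks₁₂ _ h12, h11, h22, det_fin_two_of]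
  ring

/-- Sylvester/Desnanot–Jacobi identity over a commutative ring, with a `det A` factor. -/
lemma key_mul (m : ℕ) (A : Matrix (Fin (m + 2)) (Fin (m + 2)) R) :
    A.det * ((A.submatrix (fun i : Fin m => i.castSucc.castSucc)
        (fun i : Fin m => i.castSucc.castSucc)).det * A.det) =
    A.det * ((A.submatrix Fin.castSucc Fin.castSucc).det *
          (A.submatrix (Fin.succAbove (pIdx m)) (Fin.succAbove (pIdx m))).det -
        (A.submatrix Fin.castSucc (Fin.succAbove (pIdx m))).det *
          (A.submatrix (Fin.succAbove (pIdx m)) Fin.castSucc).det) := by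
  rw [← det_sylB, ← det_mul, det_mul_sylB]
  ring

end Statement8Aux

open Statement8Aux in
/-- Sylvester's determinant identity (2×2 case) for a square matrix `A` of size `m + 2`
(so `j = m + 1`, rows/columns indexed `1, ..., j+1`): with `[r; c]` denoting the minor
obtained by deleting rows `r` and columns `c` (here the last two indices play the roles of
`j` and `j+1`),
`[j, j+1; j, j+1] · det A = [j+1; j+1] · [j; j] − [j+1; j] · [j; j+1]`. -/
theorem statement8 {R : Type*} [CommRing R] (m : ℕ)
    (A : Matrix (Fin (m + 2)) (Fin (m + 2)) R) :
    (A.submatrix (fun i : Fin m => i.castSucc.castSucc)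
        (fun i : Fin m => i.castSucc.castSucc)).det * A.det =
      (A.submatrix Fin.castSucc Fin.castSucc).det *
          (A.submatrix (Fin.succAbove ⟨m, by omega⟩) (Fin.succAbove ⟨m, by omega⟩)).det -
        (A.submatrix Fin.castSucc (Fin.succAbove ⟨m, by omega⟩)).det *
          (A.submatrix (Fin.succAbove ⟨m, by omega⟩) Fin.castSucc).det := by
  -- Prove the identity for the generic matrix over `MvPolynomial`, then specialize.
  set X : Matrix (Fin (m + 2)) (Fin (m + 2))
      (MvPolynomial (Fin (m + 2) × Fin (m + 2)) ℤ) :=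
    mvPolynomialX (Fin (m + 2)) (Fin (m + 2)) ℤ with hX
  have hgen :
      (X.submatrix (fun i : Fin m => i.castSucc.castSucc)
        (fun i : Fin m => i.castSucc.castSucc)).det * X.det =
      (X.submatrix Fin.castSucc Fin.castSucc).det *
          (X.submatrix (Fin.succAbove (pIdx m)) (Fin.succAbove (pIdx m))).det -
        (X.submatrix Fin.castSucc (Fin.succAbove (pIdx m))).det *
          (X.submatrix (Fin.succAbove (pIdx m)) Fin.castSucc).det :=
    mul_left_cancel₀ (det_mvPolynomialX_ne_zero (Fin (m + 2)) ℤ) (key_mul m X)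
  have hφ := congrArg (MvPolynomial.eval₂Hom (Int.castRingHom R)
    (fun pq : Fin (m + 2) × Fin (m + 2) => A pq.1 pq.2)) hgen
  have hXA : X.map (MvPolynomial.eval₂ (Int.castRingHom R)
      (fun pq : Fin (m + 2) × Fin (m + 2) => A pq.1 pq.2)) = A :=
    mvPolynomialX_map_eval₂ _ A
  simp only [_root_.map_mul, _root_.map_sub, RingHom.map_det, RingHom.mapMatrix_apply,
    ← submatrix_map, MvPolynomial.coe_eval₂Hom, hXA] at hφ
  exact hφ
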